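/- Delay lower bound on symmetric trees: let D ≥ 1 and let N_1, …, N_D be positive integers. For each level d with 0 ≤ d < D and each level-d node v = (c_1, …, c_d) (a tuple with c_j ∈ Fin N_j), let σ_v : ℕ → Option (Fin N_{d+1}) be an arbitrary schedule of v's children. Then there exists a root-to-leaf path c_1 ∈ Fin N_1, …, c_D ∈ Fin N_D such that for every d with 1 ≤ d ≤ D, there is a time t with σ_{(c_1,…,c_{d−1})}(s) ≠ some c_d for all s with t ≤ s < t + N_d − 1; in particular, along this path the maximum inter-scheduling time of the link at level d is at least N_d for every d, so their sum is at least Σ_{d=1}^{D} N_d. -/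
import Mathlib

lemma window_miss (M : ℕ) (hM : 1 ≤ M) (σ : ℕ → Option (Fin M)) :
    ∃ c : Fin M, ∀ s : ℕ, s < M - 1 → σ s ≠ some c := by
  by_contra h
  push_neg at h
  choose f hf1 hf2 using h
  have hinj : Function.Injective (fun c => (⟨f c, hf1 c⟩ : Fin (M-1))) := by
    intro a b hab
    simp only [Fin.mk.injEq] at hab
    have : σ (f a) = σ (f b) := by rw [hab]
    rw [hf2 a, hf2 b] at this
    exact Option.some_injective _ this
  have := Fintype.card_le_of_injective _ hinj
  simp at this
  omega

noncomputable def buildPath (D : ℕ) (N : ℕ → ℕ) (hN : ∀ d, 1 ≤ N d)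
    (σ : ∀ d : Fin D, ((j : Fin d.val) → Fin (N j.val)) → ℕ → Option (Fin (N d.val))) :
    (n : ℕ) → (j : Fin n) → Fin (N j.val)
  | 0 => fun j => j.elim0
  | n+1 => Fin.snoc (buildPath D N hN σ n)
      (if h : n < D then
        Classical.choose (window_miss (N n) (hN n) (σ ⟨n, h⟩ (buildPath D N hN σ n)))
      else ⟨0, hN n⟩)

lemma buildPath_prefix (D : ℕ) (N : ℕ → ℕ) (hN : ∀ d, 1 ≤ N d)
    (σ : ∀ d : Fin D, ((j : Fin d.val) → Fin (N j.val)) → ℕ → Option (Fin (N d.val)))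
    (m n : ℕ) (h : m ≤ n) (j : Fin m) :
    buildPath D N hN σ n ⟨j.val, lt_of_lt_of_le j.isLt h⟩ = buildPath D N hN σ m j := by
  induction n with
  | zero => exact absurd (lt_of_lt_of_le j.isLt h) (Nat.not_lt_zero _)
  | succ n ih =>
    rcases Nat.eq_or_lt_of_le h with h' | h'
    · subst h'; rfl
    · have hm : m ≤ n := Nat.lt_succ_iff.mp h'
      have hj : j.val < n := lt_of_lt_of_le j.isLt hm
      exact (Fin.snoc_castSucc _ _ (⟨j.val, hj⟩ : Fin n)).trans (ih hm)

theorem delay_lower_bound_symmetric_tree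
    (D : ℕ) (hD : 1 ≤ D) (N : ℕ → ℕ) (hN : ∀ d, 1 ≤ N d)
    (σ : ∀ d : Fin D, ((j : Fin d.val) → Fin (N j.val)) → ℕ → Option (Fin (N d.val))) :
    ∃ c : (d : Fin D) → Fin (N d.val),
      ∀ d : Fin D, ∃ t : ℕ, ∀ s : ℕ, t ≤ s → s < t + (N d.val - 1) →
        σ d (fun j => c ⟨j.val, j.isLt.trans d.isLt⟩) s ≠ some (c d) := by
  refine ⟨fun d => buildPath D N hN σ D d, fun d => ⟨0, fun s _ hs hσ => ?_⟩⟩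
  have hpref : (fun j : Fin d.val => buildPath D N hN σ D ⟨j.val, j.isLt.trans d.isLt⟩)
      = buildPath D N hN σ d.val := by
    funext j
    exact buildPath_prefix D N hN σ d.val D (le_of_lt d.isLt) j
  have hcd : buildPath D N hN σ D d
      = Classical.choose (window_miss (N d.val) (hN d.val)
          (σ ⟨d.val, d.isLt⟩ (buildPath D N hN σ d.val))) := by
    have h1 : buildPath D N hN σ D d
        = buildPath D N hN σ (d.val + 1) (Fin.last d.val) := by
      have := buildPath_prefix D N hN σ (d.val + 1) D d.isLt (Fin.last d.val)
      simp only [Fin.val_last] at this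
      rw [← this]
    rw [h1]
    show Fin.snoc _ _ (Fin.last d.val) = _
    rw [Fin.snoc_last]
    rw [dif_pos d.isLt]
  have hspec := Classical.choose_spec (window_miss (N d.val) (hN d.val)
      (σ ⟨d.val, d.isLt⟩ (buildPath D N hN σ d.val)))
  simp only [hpref, hcd] at hσ
  exact hspec s (by omega) hσ
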